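/- (Backward Convergence Lemma) Suppose two compatible tuples (i₁▷i₂, D₁, D₂) and (i₃▷i₄, D₃, D₄) are both forward convergent to σ at time n₀, and |{D₁,D₂} ∩ {D₃,D₄}| = 1; let D be the unique direction not in {D₁,D₂}∪{D₃,D₄}. Then every message sent from R_{i₁}^{i₂} ∩ R_{i₃}^{i₄} in the direction D equals σ for all times n ≥ n₀ + 2N. -/
import Mathlib


/-- The four grid directions. -/
inductive Dir | north | south | east | west
deriving DecidableEq

/-- Direction vectors. -/
def dirVec : Dir → ℤ × ℤ
  | .north => (0, 1)
  | .south => (0, -1)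
  | .east => (1, 0)
  | .west => (-1, 0)

/-- The axis-aligned rectangle with corners `i₁` and `i₂`. -/
def rect (i₁ i₂ : ℤ × ℤ) : Set (ℤ × ℤ) :=
  {p | min i₁.1 i₂.1 ≤ p.1 ∧ p.1 ≤ max i₁.1 i₂.1 ∧
       min i₁.2 i₂.2 ≤ p.2 ∧ p.2 ≤ max i₁.2 i₂.2}

/-- The tuple `(i₁ ▷ i₂, D₁, D₂)` is compatible: `D₁, D₂` are orthogonal directions
and `i₂ - i₁` is a nonnegative combination of their direction vectors. -/
def compatible (i₁ i₂ : ℤ × ℤ) (D₁ D₂ : Dir) : Prop :=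
  ((dirVec D₁).1 * (dirVec D₂).1 + (dirVec D₁).2 * (dirVec D₂).2 = 0) ∧
  ∃ c₁ c₂ : ℝ, 0 ≤ c₁ ∧ 0 ≤ c₂ ∧
    c₁ * ((dirVec D₁).1 : ℝ) + c₂ * ((dirVec D₂).1 : ℝ) = ((i₂.1 - i₁.1 : ℤ) : ℝ) ∧
    c₁ * ((dirVec D₁).2 : ℝ) + c₂ * ((dirVec D₂).2 : ℝ) = ((i₂.2 - i₁.2 : ℤ) : ℝ)

/-- The interior `B = {1, …, N}²` of the `(N+2) × (N+2)` grid. -/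
def gridB (N : ℕ) : Set (ℤ × ℤ) :=
  {p | 1 ≤ p.1 ∧ p.1 ≤ N ∧ 1 ≤ p.2 ∧ p.2 ≤ N}

/-- The four lattice neighbors of a point. -/
def nbrs (p : ℤ × ℤ) : Finset (ℤ × ℤ) :=
  {(p.1 + 1, p.2), (p.1 - 1, p.2), (p.1, p.2 + 1), (p.1, p.2 - 1)}

def opp : Dir → Dir
  | .north => .south | .south => .north | .east => .west | .west => .east

def perp : Dir → Dir
  | .north => .east | .south => .east | .east => .north | .west => .north

def ip (v w : ℤ × ℤ) : ℤ := v.1 * w.1 + v.2 * w.2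

lemma dirVec_opp (E : Dir) : dirVec (opp E) = -dirVec E := by cases E <;> rfl

lemma ip_self (E : Dir) : ip (dirVec E) (dirVec E) = 1 := by cases E <;> decide

lemma ip_comm (v w : ℤ × ℤ) : ip v w = ip w v := by unfold ip; ring

lemma ip_sub (v q w : ℤ × ℤ) : ip v (q - w) = ip v q - ip v w := by
  unfold ip; simp [Prod.fst_sub, Prod.snd_sub]; ring

lemma mem_nbrs_add (p : ℤ × ℤ) (E : Dir) : p + dirVec E ∈ nbrs p := by
  cases E <;> simp [nbrs, dirVec, Prod.ext_iff] <;> omega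

lemma sum_nbrs_sdiff (f : ℤ × ℤ → ℤ) (p : ℤ × ℤ) (E : Dir) :
    ∑ k ∈ nbrs p \ {p + dirVec E}, f k
      = f (p - dirVec E) + (f (p + dirVec (perp E)) + f (p - dirVec (perp E))) := by
  cases E
  case north =>
    rw [show nbrs p \ {p + dirVec Dir.north}
        = {p - dirVec Dir.north, p + dirVec (perp Dir.north), p - dirVec (perp Dir.north)}
      from by ext q; simp [nbrs, dirVec, perp, Prod.ext_iff]; omega]
    rw [Finset.sum_insert (by simp [dirVec, perp, Prod.ext_iff] <;> omega),
        Finset.sum_insert (by simp [dirVec, perp, Prod.ext_iff] <;> omega),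
        Finset.sum_singleton]
  case south =>
    rw [show nbrs p \ {p + dirVec Dir.south}
        = {p - dirVec Dir.south, p + dirVec (perp Dir.south), p - dirVec (perp Dir.south)}
      from by ext q; simp [nbrs, dirVec, perp, Prod.ext_iff]; omega]
    rw [Finset.sum_insert (by simp [dirVec, perp, Prod.ext_iff] <;> omega),
        Finset.sum_insert (by simp [dirVec, perp, Prod.ext_iff] <;> omega),
        Finset.sum_singleton]
  case east =>
    rw [show nbrs p \ {p + dirVec Dir.east}
        = {p - dirVec Dir.east, p + dirVec (perp Dir.east), p - dirVec (perp Dir.east)}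
      from by ext q; simp [nbrs, dirVec, perp, Prod.ext_iff]; omega]
    rw [Finset.sum_insert (by simp [dirVec, perp, Prod.ext_iff] <;> omega),
        Finset.sum_insert (by simp [dirVec, perp, Prod.ext_iff] <;> omega),
        Finset.sum_singleton]
  case west =>
    rw [show nbrs p \ {p + dirVec Dir.west}
        = {p - dirVec Dir.west, p + dirVec (perp Dir.west), p - dirVec (perp Dir.west)}
      from by ext q; simp [nbrs, dirVec, perp, Prod.ext_iff]; omega]
    rw [Finset.sum_insert (by simp [dirVec, perp, Prod.ext_iff] <;> omega),
        Finset.sum_insert (by simp [dirVec, perp, Prod.ext_iff] <;> omega),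
        Finset.sum_singleton]

lemma orth_perp (A B : Dir) (h : ip (dirVec A) (dirVec B) = 0) :
    dirVec B = dirVec (perp A) ∨ dirVec B = -dirVec (perp A) := by
  revert h; cases A <;> cases B <;> decide

lemma rect_subset_grid (N : ℕ) (i₁ i₂ : ℤ × ℤ) (h₁ : i₁ ∈ gridB N) (h₂ : i₂ ∈ gridB N) :
    rect i₁ i₂ ⊆ gridB N := by
  intro x hx; simp [rect, gridB] at *; omega

lemma lo_exists (N : ℕ) (E : Dir) (i₁ i₂ : ℤ × ℤ) (h₁ : i₁ ∈ gridB N) (h₂ : i₂ ∈ gridB N) :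
    ∃ lo : ℤ, ∀ x ∈ rect i₁ i₂, lo ≤ ip (dirVec E) x ∧ ip (dirVec E) x ≤ lo + ((N : ℤ) - 1) := by
  simp only [gridB, Set.mem_setOf_eq] at h₁ h₂
  cases E
  · exact ⟨min i₁.2 i₂.2, by intro x hx; simp [rect, ip, dirVec] at *; omega⟩
  · exact ⟨-(max i₁.2 i₂.2), by intro x hx; simp [rect, ip, dirVec] at *; omega⟩
  · exact ⟨min i₁.1 i₂.1, by intro x hx; simp [rect, ip, dirVec] at *; omega⟩
  · exact ⟨-(max i₁.1 i₂.1), by intro x hx; simp [rect, ip, dirVec] at *; omega⟩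

instance : Fintype Dir :=
  ⟨{.north, .south, .east, .west}, by intro x; cases x <;> decide⟩

lemma dirs_fact (D₁ D₂ D₃ D₄ D : Dir)
    (h₁ : (dirVec D₁).1 * (dirVec D₂).1 + (dirVec D₁).2 * (dirVec D₂).2 = 0)
    (h₂ : (dirVec D₃).1 * (dirVec D₄).1 + (dirVec D₃).2 * (dirVec D₄).2 = 0)
    (hmeet : (({D₁, D₂} : Finset Dir) ∩ ({D₃, D₄} : Finset Dir)).card = 1)
    (hD : D ∉ (({D₁, D₂} : Finset Dir) ∪ ({D₃, D₄} : Finset Dir))) :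
    ((perp D = D₁ ∨ perp D = D₂) ∨ (perp D = D₃ ∨ perp D = D₄)) ∧
    ((opp (perp D) = D₁ ∨ opp (perp D) = D₂) ∨ (opp (perp D) = D₃ ∨ opp (perp D) = D₄)) := by
  revert h₁ h₂ hmeet hD
  cases D₁ <;> cases D₂ <;> cases D₃ <;> cases D₄ <;> cases D <;> decide

lemma step' (N : ℕ) (σ : ℤ) (hσ : σ = 1 ∨ σ = -1)
    (m : ℕ → (ℤ × ℤ) → (ℤ × ℤ) → ℤ)
    (hrange : ∀ n p q, m n p q = -1 ∨ m n p q = 0 ∨ m n p q = 1)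
    (hup : ∀ p ∈ gridB N, ∀ q ∈ nbrs p, ∀ n : ℕ, 0 < n →
      m n p q = Int.sign (∑ k ∈ nbrs p \ {q}, m (n-1) k p))
    (q : ℤ × ℤ) (hq : q ∈ gridB N) (E : Dir) (n : ℕ) (hn : 0 < n)
    (hknown :
        m (n-1) (q - dirVec E) q = σ ∧ m (n-1) (q + dirVec (perp E)) q = σ
      ∨ m (n-1) (q - dirVec E) q = σ ∧ m (n-1) (q - dirVec (perp E)) q = σ
      ∨ m (n-1) (q + dirVec (perp E)) q = σ ∧ m (n-1) (q - dirVec (perp E)) q = σ) :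
    m n q (q + dirVec E) = σ := by
  rw [hup q hq _ (mem_nbrs_add q E) n hn,
      sum_nbrs_sdiff (fun k => m (n-1) k q) q E]
  rcases hknown with ⟨ha, hb⟩ | ⟨ha, hc⟩ | ⟨hb, hc⟩
  · rcases hrange (n-1) (q - dirVec (perp E)) q with h | h | h <;>
      simp only [ha, hb, h] <;> rcases hσ with rfl | rfl <;> decide
  · rcases hrange (n-1) (q + dirVec (perp E)) q with h | h | h <;>
      simp only [ha, hc, h] <;> rcases hσ with rfl | rfl <;> decide
  · rcases hrange (n-1) (q - dirVec E) q with h | h | h <;>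
      simp only [hb, hc, h] <;> rcases hσ with rfl | rfl <;> decide

lemma forward (N : ℕ) (σ : ℤ) (hσ : σ = 1 ∨ σ = -1) (n₀ : ℕ)
    (i₁ i₂ : ℤ × ℤ) (hi₁ : i₁ ∈ gridB N) (hi₂ : i₂ ∈ gridB N)
    (A B : Dir) (hAB : ip (dirVec A) (dirVec B) = 0)
    (m : ℕ → (ℤ × ℤ) → (ℤ × ℤ) → ℤ)
    (hrange : ∀ n p q, m n p q = -1 ∨ m n p q = 0 ∨ m n p q = 1)
    (hup : ∀ p ∈ gridB N, ∀ q ∈ nbrs p, ∀ n : ℕ, 0 < n →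
      m n p q = Int.sign (∑ k ∈ nbrs p \ {q}, m (n-1) k p))
    (hA : ∀ p : ℤ × ℤ, p ∉ rect i₁ i₂ → p + dirVec A ∈ rect i₁ i₂ →
      ∀ n : ℕ, n₀ ≤ n → m n p (p + dirVec A) = σ)
    (hB : ∀ p : ℤ × ℤ, p ∉ rect i₁ i₂ → p + dirVec B ∈ rect i₁ i₂ →
      ∀ n : ℕ, n₀ ≤ n → m n p (p + dirVec B) = σ) :
    ∀ E : Dir, (E = A ∨ E = B) → ∀ q : ℤ × ℤ, q + dirVec E ∈ rect i₁ i₂ →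
      ∀ n : ℕ, n₀ + 2 * N ≤ n + 1 → m n q (q + dirVec E) = σ := by
  obtain ⟨loA, hloA⟩ := lo_exists N A i₁ i₂ hi₁ hi₂
  obtain ⟨loB, hloB⟩ := lo_exists N B i₁ i₂ hi₁ hi₂
  have hN : 1 ≤ N := by
    obtain ⟨a, b, -⟩ := hi₁
    have : (1 : ℤ) ≤ (N : ℤ) := le_trans a b
    exact_mod_cast this
  have hBA : ip (dirVec B) (dirVec A) = 0 := by rw [ip_comm]; exact hAB
  have hgrid := rect_subset_grid N i₁ i₂ hi₁ hi₂
  -- the key induction on time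
  have key : ∀ n : ℕ, ∀ q ∈ rect i₁ i₂, ∀ E : Dir, (E = A ∨ E = B) →
      (n₀ : ℤ) + ((ip (dirVec A) q - loA) + (ip (dirVec B) q - loB)) < (n : ℤ) →
      m n q (q + dirVec E) = σ := by
    intro n
    induction n using Nat.strong_induction_on with
    | _ n IH =>
      intro q hq E hE hlt
      obtain ⟨hA1, hA2⟩ := hloA q hq
      obtain ⟨hB1, hB2⟩ := hloB q hq
      have hn0 : 0 < n := by
        have : (0 : ℤ) < (n : ℤ) := by linarith
        exact_mod_cast this
      have hcast : ((n - 1 : ℕ) : ℤ) = (n : ℤ) - 1 := by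
        rw [Nat.cast_sub hn0]; simp
      have hn₀le : n₀ ≤ n - 1 := by
        have : (n₀ : ℤ) ≤ ((n - 1 : ℕ) : ℤ) := by rw [hcast]; linarith
        exact_mod_cast this
      -- both predecessors send σ at time n-1
      have pred : ∀ E' : Dir, (E' = A ∨ E' = B) →
          (∀ p : ℤ × ℤ, p ∉ rect i₁ i₂ → p + dirVec E' ∈ rect i₁ i₂ →
            ∀ n : ℕ, n₀ ≤ n → m n p (p + dirVec E') = σ) →
          m (n-1) (q - dirVec E') q = σ := by
        intro E' hE' hbnd
        have hcanc : (q - dirVec E') + dirVec E' = q := by ring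
        have hipA : ip (dirVec A) (dirVec E') + ip (dirVec B) (dirVec E') = 1 := by
          rcases hE' with h | h <;> rw [h] <;> simp [ip_self, hAB, hBA]
        by_cases hmem : q - dirVec E' ∈ rect i₁ i₂
        · have hmeas : (n₀ : ℤ) + ((ip (dirVec A) (q - dirVec E') - loA) +
              (ip (dirVec B) (q - dirVec E') - loB)) < ((n - 1 : ℕ) : ℤ) := by
            rw [hcast, ip_sub, ip_sub]; linarith
          have := IH (n-1) (by omega) (q - dirVec E') hmem E' hE' hmeas
          rwa [hcanc] at this
        · have := hbnd (q - dirVec E') hmem (by rw [hcanc]; exact hq) (n-1) hn₀le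
          rwa [hcanc] at this
      have hPA : m (n-1) (q - dirVec A) q = σ := pred A (Or.inl rfl) hA
      have hPB : m (n-1) (q - dirVec B) q = σ := pred B (Or.inr rfl) hB
      rcases hE with rfl | rfl
      · -- E = A
        apply step' N σ hσ m hrange hup q (hgrid hq) E n hn0
        rcases orth_perp E B hAB with h | h
        · right; left
          refine ⟨hPA, ?_⟩
          rwa [show q - dirVec (perp E) = q - dirVec B from by rw [h]] 
        · left
          refine ⟨hPA, ?_⟩
          rwa [show q + dirVec (perp E) = q - dirVec B from by rw [show dirVec B = -dirVec (perp E) from h]; ring]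
      · -- E = B
        apply step' N σ hσ m hrange hup q (hgrid hq) E n hn0
        rcases orth_perp E A hBA with h | h
        · right; left
          refine ⟨hPB, ?_⟩
          rwa [show q - dirVec (perp E) = q - dirVec A from by rw [h]]
        · left
          refine ⟨hPB, ?_⟩
          rwa [show q + dirVec (perp E) = q - dirVec A from by rw [show dirVec A = -dirVec (perp E) from h]; ring]
  -- conclude
  intro E hE q hmem n hn
  by_cases hqr : q ∈ rect i₁ i₂
  · apply key n q hqr E hE
    obtain ⟨a1, a2⟩ := hloA q hqr
    obtain ⟨b1, b2⟩ := hloB q hqr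
    have : (n₀ : ℤ) + 2 * (N : ℤ) ≤ (n : ℤ) + 1 := by exact_mod_cast hn
    linarith
  · have hn' : n₀ ≤ n := by omega
    rcases hE with rfl | rfl
    · exact hA q hqr hmem n hn'
    · exact hB q hqr hmem n hn'

/-- Backward Convergence Lemma: if two compatible tuples `(i₁ ▷ i₂, D₁, D₂)` and
`(i₃ ▷ i₄, D₃, D₄)` are both forward convergent to `σ` at time `n₀`, their direction
pairs share exactly one direction, and `D` is the unique direction outside
`{D₁,D₂} ∪ {D₃,D₄}`, then every message sent from `R_{i₁}^{i₂} ∩ R_{i₃}^{i₄}` in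
direction `D` equals `σ` for all `n ≥ n₀ + 2N`. -/
theorem backward_convergence_lemma
    (N : ℕ) (σ : ℤ) (hσ : σ = 1 ∨ σ = -1) (n₀ : ℕ)
    (i₁ i₂ i₃ i₄ : ℤ × ℤ)
    (hi₁ : i₁ ∈ gridB N) (hi₂ : i₂ ∈ gridB N) (hi₃ : i₃ ∈ gridB N) (hi₄ : i₄ ∈ gridB N)
    (D₁ D₂ D₃ D₄ : Dir)
    (hcomp₁ : compatible i₁ i₂ D₁ D₂) (hcomp₂ : compatible i₃ i₄ D₃ D₄)
    (hmeet : (({D₁, D₂} : Finset Dir) ∩ ({D₃, D₄} : Finset Dir)).card = 1)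
    (D : Dir) (hD : D ∉ (({D₁, D₂} : Finset Dir) ∪ ({D₃, D₄} : Finset Dir)))
    (m : ℕ → (ℤ × ℤ) → (ℤ × ℤ) → ℤ)
    -- all messages lie in {-1, 0, 1}
    (hrange : ∀ n p q, m n p q = -1 ∨ m n p q = 0 ∨ m n p q = 1)
    -- difference-message update for interior senders
    (hup : ∀ p ∈ gridB N, ∀ q ∈ nbrs p, ∀ n : ℕ, 0 < n →
      m n p q = Int.sign (∑ k ∈ nbrs p \ {q}, m (n-1) k p))
    (hFC₁ : ∀ D' ∈ ({D₁, D₂} : Set Dir), ∀ p : ℤ × ℤ, p ∉ rect i₁ i₂ →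
      p + dirVec D' ∈ rect i₁ i₂ → ∀ n : ℕ, n₀ ≤ n → m n p (p + dirVec D') = σ)
    (hFC₂ : ∀ D' ∈ ({D₃, D₄} : Set Dir), ∀ p : ℤ × ℤ, p ∉ rect i₃ i₄ →
      p + dirVec D' ∈ rect i₃ i₄ → ∀ n : ℕ, n₀ ≤ n → m n p (p + dirVec D') = σ) :
    ∀ p ∈ rect i₁ i₂ ∩ rect i₃ i₄, ∀ n : ℕ,
      n₀ + 2 * N ≤ n → m n p (p + dirVec D) = σ := by
  have hN : 1 ≤ N := by
    obtain ⟨a, b, -⟩ := hi₁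
    have h1 : (1 : ℤ) ≤ (N : ℤ) := le_trans a b
    exact_mod_cast h1
  have F₁ := forward N σ hσ n₀ i₁ i₂ hi₁ hi₂ D₁ D₂ hcomp₁.1 m hrange hup
      (hFC₁ D₁ (by left; rfl)) (hFC₁ D₂ (by right; rfl))
  have F₂ := forward N σ hσ n₀ i₃ i₄ hi₃ hi₄ D₃ D₄ hcomp₂.1 m hrange hup
      (hFC₂ D₃ (by left; rfl)) (hFC₂ D₄ (by right; rfl))
  have fact := dirs_fact D₁ D₂ D₃ D₄ D hcomp₁.1 hcomp₂.1 hmeet hD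
  intro p hp n hn
  have hp₁ : p ∈ rect i₁ i₂ := hp.1
  have hp₂ : p ∈ rect i₃ i₄ := hp.2
  have hn0 : 0 < n := by omega
  have htime : n₀ + 2 * N ≤ (n - 1) + 1 := by omega
  apply step' N σ hσ m hrange hup p (rect_subset_grid N i₁ i₂ hi₁ hi₂ hp₁) D n hn0
  right; right
  constructor
  · have hc : (p + dirVec (perp D)) + dirVec (opp (perp D)) = p := by
      rw [dirVec_opp]; ring
    rcases fact.2 with h | h
    · have := F₁ (opp (perp D)) h (p + dirVec (perp D)) (by rw [hc]; exact hp₁) (n-1) htime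
      rwa [hc] at this
    · have := F₂ (opp (perp D)) h (p + dirVec (perp D)) (by rw [hc]; exact hp₂) (n-1) htime
      rwa [hc] at this
  · have hc : (p - dirVec (perp D)) + dirVec (perp D) = p := by ring
    rcases fact.1 with h | h
    · have := F₁ (perp D) h (p - dirVec (perp D)) (by rw [hc]; exact hp₁) (n-1) htime
      rwa [hc] at this
    · have := F₂ (perp D) h (p - dirVec (perp D)) (by rw [hc]; exact hp₂) (n-1) htime
      rwa [hc] at this
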